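/- Let (S_n(i)) be the discrete stick-breaking process on [n] and f : ℕ → ℝ≥0 a function. Then E[∑_{i=0}^{κ_n} f(S_n(i))] = ∑_{ℓ=1}^{n} f(ℓ)/ℓ. -/

import Mathlib

open scoped ENNReal NNReal

/-- The discrete stick-breaking process on `[n]`, encoded as a `PMF` on the
lists of successive block sizes. -/
noncomputable def stickBreaking : ℕ → PMF (List ℕ)
  | 0 => PMF.pure []
  | (n + 1) =>
    (PMF.uniformOfFinset ((Finset.Icc 1 (n + 1)).attach)
      (Finset.attach_nonempty_iff.2 ⟨1, by simp⟩)).bind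
      fun s => (stickBreaking (n + 1 - s.1)).map (List.cons s.1)
  decreasing_by
    have hs := s.2
    rw [Finset.mem_Icc] at hs
    omega

lemma pmf_tsum_bind {α β : Type*} (p : PMF α) (q : α → PMF β) (g : β → ℝ≥0∞) :
    ∑' b, p.bind q b * g b = ∑' a, p a * ∑' b, q a b * g b := by
  simp only [PMF.bind_apply]
  rw [tsum_congr fun b => (ENNReal.tsum_mul_right).symm]
  rw [ENNReal.tsum_comm]
  simp only [mul_assoc, ENNReal.tsum_mul_left]

lemma pmf_tsum_map {α β : Type*} (p : PMF α) (h : α → β) (g : β → ℝ≥0∞) :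
    ∑' b, p.map h b * g b = ∑' a, p a * g (h a) := by
  rw [PMF.map, pmf_tsum_bind]
  congr 1
  funext a
  congr 1
  rw [tsum_eq_single (h a)]
  · simp
  · intro b hb; simp [PMF.pure_apply, hb]

lemma alg (f : ℕ → ℝ≥0) (m : ℕ) :
    ∑ s ∈ Finset.Icc 1 (m + 1), (((m + 1 : ℕ) : ℝ≥0∞))⁻¹ *
        ((f s : ℝ≥0∞) + ∑ ℓ ∈ Finset.Icc 1 (m + 1 - s), (f ℓ : ℝ≥0∞) / ℓ) =
      ∑ ℓ ∈ Finset.Icc 1 (m + 1), (f ℓ : ℝ≥0∞) / ℓ := by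
  have hM0 : ((m + 1 : ℕ) : ℝ≥0∞) ≠ 0 := by exact_mod_cast Nat.succ_ne_zero m
  have hMt : ((m + 1 : ℕ) : ℝ≥0∞) ≠ ∞ := ENNReal.natCast_ne_top _
  rw [← Finset.mul_sum, Finset.sum_add_distrib]
  have hswap : ∑ s ∈ Finset.Icc 1 (m + 1), ∑ ℓ ∈ Finset.Icc 1 (m + 1 - s),
      (f ℓ : ℝ≥0∞) / ℓ = ∑ ℓ ∈ Finset.Icc 1 m, ∑ s ∈ Finset.Icc 1 (m + 1 - ℓ),
      (f ℓ : ℝ≥0∞) / ℓ := by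
    refine Finset.sum_comm' ?_
    intro s ℓ
    simp only [Finset.mem_Icc]
    omega
  rw [hswap]
  have hconst : ∀ ℓ ∈ Finset.Icc 1 m, ∑ s ∈ Finset.Icc 1 (m + 1 - ℓ),
      (f ℓ : ℝ≥0∞) / ℓ = ((m + 1 - ℓ : ℕ) : ℝ≥0∞) * ((f ℓ : ℝ≥0∞) / ℓ) := by
    intro ℓ _
    rw [Finset.sum_const, Nat.card_Icc, nsmul_eq_mul]
    norm_num
  rw [Finset.sum_congr rfl hconst]
  rw [Finset.sum_Icc_succ_top (by omega : 1 ≤ m + 1)]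
  have hcomb : ∑ s ∈ Finset.Icc 1 m, (f s : ℝ≥0∞) +
      ∑ ℓ ∈ Finset.Icc 1 m, ((m + 1 - ℓ : ℕ) : ℝ≥0∞) * ((f ℓ : ℝ≥0∞) / ℓ) =
      ((m + 1 : ℕ) : ℝ≥0∞) * ∑ ℓ ∈ Finset.Icc 1 m, (f ℓ : ℝ≥0∞) / ℓ := by
    rw [← Finset.sum_add_distrib, Finset.mul_sum]
    refine Finset.sum_congr rfl ?_
    intro ℓ hℓ
    rw [Finset.mem_Icc] at hℓ
    have hℓ0 : ((ℓ : ℕ) : ℝ≥0∞) ≠ 0 := by exact_mod_cast (by omega : ℓ ≠ 0)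
    have : (f ℓ : ℝ≥0∞) = (ℓ : ℝ≥0∞) * ((f ℓ : ℝ≥0∞) / ℓ) :=
      (ENNReal.mul_div_cancel' (fun h => absurd h hℓ0) (fun h => absurd h (ENNReal.natCast_ne_top _))).symm
    nth_rewrite 1 [this]
    rw [← add_mul, ← Nat.cast_add]
    congr 2
    omega
  calc ((m + 1 : ℕ) : ℝ≥0∞)⁻¹ *
        (∑ s ∈ Finset.Icc 1 m, (f s : ℝ≥0∞) + (f (m + 1) : ℝ≥0∞) +
          ∑ ℓ ∈ Finset.Icc 1 m, ((m + 1 - ℓ : ℕ) : ℝ≥0∞) * ((f ℓ : ℝ≥0∞) / ℓ))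
      = ((m + 1 : ℕ) : ℝ≥0∞)⁻¹ *
        (((m + 1 : ℕ) : ℝ≥0∞) * ∑ ℓ ∈ Finset.Icc 1 m, (f ℓ : ℝ≥0∞) / ℓ +
          (f (m + 1) : ℝ≥0∞)) := by
        rw [← hcomb]; ring
    _ = ∑ ℓ ∈ Finset.Icc 1 m, (f ℓ : ℝ≥0∞) / ℓ + (f (m + 1) : ℝ≥0∞) / ((m + 1 : ℕ) : ℝ≥0∞) := by
        rw [mul_add, ← mul_assoc, ENNReal.inv_mul_cancel hM0 hMt, one_mul,
          ENNReal.div_eq_inv_mul]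
    _ = ∑ ℓ ∈ Finset.Icc 1 (m + 1), (f ℓ : ℝ≥0∞) / ℓ := by
        rw [Finset.sum_Icc_succ_top (by omega : 1 ≤ m + 1)]

lemma key (f : ℕ → ℝ≥0) : ∀ n : ℕ,
    ∑' l : List ℕ, stickBreaking n l * (l.map fun s => (f s : ℝ≥0∞)).sum =
      ∑ ℓ ∈ Finset.Icc 1 n, (f ℓ : ℝ≥0∞) / ℓ := by
  intro n
  induction n using Nat.strong_induction_on with
  | _ n ih =>
    match n with
    | 0 => simp [stickBreaking]
    | m + 1 =>
      rw [stickBreaking, pmf_tsum_bind]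
      have hinner : ∀ s : {x // x ∈ Finset.Icc 1 (m + 1)},
          ∑' l : List ℕ, ((stickBreaking (m + 1 - s.1)).map (List.cons s.1)) l *
              ((l.map fun x => (f x : ℝ≥0∞)).sum) =
            (f s.1 : ℝ≥0∞) + ∑ ℓ ∈ Finset.Icc 1 (m + 1 - s.1), (f ℓ : ℝ≥0∞) / ℓ := by
        intro s
        rw [pmf_tsum_map]
        have hs := s.2; rw [Finset.mem_Icc] at hs
        have hrec := ih (m + 1 - s.1) (by omega)
        calc ∑' l, stickBreaking (m + 1 - s.1) l * (((s.1 :: l).map fun x => (f x : ℝ≥0∞)).sum)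
            = ∑' l, (stickBreaking (m + 1 - s.1) l * (f s.1 : ℝ≥0∞) +
                stickBreaking (m + 1 - s.1) l * ((l.map fun x => (f x : ℝ≥0∞)).sum)) := by
              refine tsum_congr fun l => ?_
              simp [mul_add]
          _ = (f s.1 : ℝ≥0∞) + ∑ ℓ ∈ Finset.Icc 1 (m + 1 - s.1), (f ℓ : ℝ≥0∞) / ℓ := by
              rw [ENNReal.tsum_add, ENNReal.tsum_mul_right, (stickBreaking (m + 1 - s.1)).tsum_coe,
                one_mul, hrec]
      rw [tsum_congr fun s => by rw [hinner s]]
      rw [tsum_fintype, Finset.univ_eq_attach]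
      simp only [PMF.uniformOfFinset_apply, Finset.mem_attach, if_true, Finset.card_attach,
        Finset.card_attach, Nat.card_Icc]
      rw [Finset.sum_attach (Finset.Icc 1 (m + 1))
        (fun s => ((m + 1 + 1 - 1 : ℕ) : ℝ≥0∞)⁻¹ *
          ((f s : ℝ≥0∞) + ∑ ℓ ∈ Finset.Icc 1 (m + 1 - s), (f ℓ : ℝ≥0∞) / ℓ))]
      have : (m + 1 + 1 - 1 : ℕ) = (m + 1 : ℕ) := by omega
      rw [this]
      exact alg f m

/-- For the discrete stick-breaking process `(S_n(i))_{0 ≤ i ≤ κ_n}` on `[n]`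
and any `f : ℕ → ℝ≥0`, `E[∑_{i=0}^{κ_n} f(S_n(i))] = ∑_{ℓ=1}^n f(ℓ)/ℓ`. -/
theorem stmt_8 (n : ℕ) (hn : 1 ≤ n) (f : ℕ → ℝ≥0) :
    ∑' l : List ℕ, stickBreaking n l * (l.map fun s => (f s : ℝ≥0∞)).sum =
      ∑ ℓ ∈ Finset.Icc 1 n, (f ℓ : ℝ≥0∞) / ℓ := by
  exact key f n
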